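/- Let 0 < σ < n/2, λ > 0, x ∈ ℝ^n, and let u, K : ℝ^n → ℝ be nonnegative measurable functions. Then, with ξ^{x,λ} = x + λ²(ξ−x)/|ξ−x|² and u^{x,λ}(ξ) = (λ/|ξ−x|)^{n−2σ} u(ξ^{x,λ}), the change of variables identity holds: (λ/|ξ−x|)^{n−2σ} ∫_{|z−x|≥λ} K(z) u(z)^{(n+2σ)/(n−2σ)} / |ξ^{x,λ} − z|^{n−2σ} dz = ∫_{|z−x|≤λ} K(z^{x,λ}) u^{x,λ}(z)^{(n+2σ)/(n−2σ)} / |ξ − z|^{n−2σ} dz, for every ξ ≠ x. -/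

import Mathlib

open MeasureTheory EuclideanGeometry Set

set_option maxHeartbeats 1000000 in
theorem stmt_10 (n : ℕ) (hn : 1 ≤ n) (σ lam : ℝ) (hσ : 0 < σ) (hσn : 2 * σ < n)
    (hlam : 0 < lam) (x : EuclideanSpace ℝ (Fin n))
    (u K : EuclideanSpace ℝ (Fin n) → ℝ) (hu : Measurable u) (hK : Measurable K)
    (hu0 : ∀ z, 0 ≤ u z) (hK0 : ∀ z, 0 ≤ K z)
    (ξ : EuclideanSpace ℝ (Fin n)) (hξ : ξ ≠ x) :
    ENNReal.ofReal ((lam / ‖ξ - x‖) ^ ((n : ℝ) - 2 * σ)) *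
      ∫⁻ z in {z : EuclideanSpace ℝ (Fin n) | lam ≤ ‖z - x‖},
        ENNReal.ofReal (K z * u z ^ (((n : ℝ) + 2 * σ) / ((n : ℝ) - 2 * σ)) /
          ‖(x + (lam ^ 2 / ‖ξ - x‖ ^ 2) • (ξ - x)) - z‖ ^ ((n : ℝ) - 2 * σ))
    = ∫⁻ z in {z : EuclideanSpace ℝ (Fin n) | ‖z - x‖ ≤ lam},
        ENNReal.ofReal (K (x + (lam ^ 2 / ‖z - x‖ ^ 2) • (z - x)) *
          ((lam / ‖z - x‖) ^ ((n : ℝ) - 2 * σ) *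
            u (x + (lam ^ 2 / ‖z - x‖ ^ 2) • (z - x))) ^ (((n : ℝ) + 2 * σ) / ((n : ℝ) - 2 * σ)) /
          ‖ξ - z‖ ^ ((n : ℝ) - 2 * σ)) := by
  haveI : Nonempty (Fin n) := ⟨⟨0, hn⟩⟩
  have he : (0:ℝ) < (n : ℝ) - 2 * σ := by
    have : (2:ℝ) * σ < n := hσn
    linarith
  set e : ℝ := (n : ℝ) - 2 * σ with he_def
  set p : ℝ := ((n : ℝ) + 2 * σ) / e with hp_def
  have hep : e * p = (n : ℝ) + 2 * σ := mul_div_cancel₀ _ he.ne'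
  -- inversion map
  have hΦ : ∀ z : EuclideanSpace ℝ (Fin n),
      x + (lam ^ 2 / ‖z - x‖ ^ 2) • (z - x) = inversion x lam z := by
    intro z
    rw [inversion_def]
    simp only [vsub_eq_sub, vadd_eq_add, dist_eq_norm, div_pow, add_comm]
  set s : Set (EuclideanSpace ℝ (Fin n)) := {z | ‖z - x‖ ≤ lam} \ {x} with hs_def
  have hsm : MeasurableSet s := by
    refine MeasurableSet.diff ?_ (measurableSet_singleton x)
    exact (isClosed_le ((continuous_id.sub continuous_const).norm) continuous_const).measurableSet
  have hinj : InjOn (inversion x lam) s := by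
    intro a _ b _ h
    have := congrArg (inversion x lam) h
    rwa [inversion_inversion x hlam.ne', inversion_inversion x hlam.ne'] at this
  have hmem : ∀ z ∈ s, z ≠ x ∧ 0 < ‖z - x‖ ∧ ‖z - x‖ ≤ lam := by
    rintro z ⟨hz1, hz2⟩
    have hzx : z ≠ x := hz2
    exact ⟨hzx, norm_sub_pos_iff.2 hzx, hz1⟩
  have himg : inversion x lam '' s = {z | lam ≤ ‖z - x‖} := by
    ext w
    constructor
    · rintro ⟨z, hz, rfl⟩
      obtain ⟨hzx, h0, h1⟩ := hmem z hz
      show lam ≤ ‖inversion x lam z - x‖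
      rw [← dist_eq_norm, dist_inversion_center, dist_eq_norm, le_div_iff₀ h0]
      nlinarith
    · intro hw
      have hw' : lam ≤ ‖w - x‖ := hw
      have hw0 : 0 < ‖w - x‖ := lt_of_lt_of_le hlam hw'
      have hwx : w ≠ x := by
        intro h; rw [h] at hw0; simp at hw0
      have hdw : dist (inversion x lam w) x = lam ^ 2 / ‖w - x‖ := by
        rw [dist_inversion_center, dist_eq_norm]
      refine ⟨inversion x lam w, ⟨?_, ?_⟩, inversion_inversion x hlam.ne' w⟩
      · show ‖inversion x lam w - x‖ ≤ lam
        rw [← dist_eq_norm, hdw, div_le_iff₀ hw0]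
        nlinarith
      · intro h
        have : dist (inversion x lam w) x = 0 := by rw [h]; simp
        rw [hdw] at this
        have : lam ^ 2 / ‖w - x‖ > 0 := by positivity
        simp_all
  -- derivative and determinant
  set f' : EuclideanSpace ℝ (Fin n) → EuclideanSpace ℝ (Fin n) →L[ℝ] EuclideanSpace ℝ (Fin n) :=
    fun z => ((lam / dist z x) ^ 2) •
      ((Submodule.reflection (ℝ ∙ (z - x))ᗮ).toContinuousLinearEquiv :
        EuclideanSpace ℝ (Fin n) →L[ℝ] EuclideanSpace ℝ (Fin n)) with hf'_def
  have hf' : ∀ z ∈ s, HasFDerivWithinAt (inversion x lam) (f' z) s z := by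
    intro z hz
    exact (hasFDerivAt_inversion (hmem z hz).1).hasFDerivWithinAt
  have hdet : ∀ z ∈ s, |(f' z).det| = (lam / ‖z - x‖) ^ (2 * n) := by
    intro z hz
    obtain ⟨hzx, h0, h1⟩ := hmem z hz
    have hL : ((((Submodule.reflection (ℝ ∙ (z - x))ᗮ).toContinuousLinearEquiv :
        EuclideanSpace ℝ (Fin n) →L[ℝ] EuclideanSpace ℝ (Fin n))) :
        EuclideanSpace ℝ (Fin n) →ₗ[ℝ] EuclideanSpace ℝ (Fin n)).det ^ 2 = 1 := by
      rw [sq, ← LinearMap.det_comp]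
      have : ∀ v, (Submodule.reflection (ℝ ∙ (z - x))ᗮ) ((Submodule.reflection (ℝ ∙ (z - x))ᗮ) v) = v := fun v =>
        Submodule.reflection_reflection _ v
      rw [show (((Submodule.reflection (ℝ ∙ (z - x))ᗮ).toContinuousLinearEquiv :
        EuclideanSpace ℝ (Fin n) →L[ℝ] EuclideanSpace ℝ (Fin n)) :
        EuclideanSpace ℝ (Fin n) →ₗ[ℝ] EuclideanSpace ℝ (Fin n)) ∘ₗ _ = LinearMap.id from
        LinearMap.ext fun v => by simp [this v]]
      exact LinearMap.det_id
    have habs : |((((Submodule.reflection (ℝ ∙ (z - x))ᗮ).toContinuousLinearEquiv :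
        EuclideanSpace ℝ (Fin n) →L[ℝ] EuclideanSpace ℝ (Fin n)) :
        EuclideanSpace ℝ (Fin n) →ₗ[ℝ] EuclideanSpace ℝ (Fin n)).det)| = 1 := by
      rw [pow_two] at hL
      rcases mul_self_eq_one_iff.1 hL with h | h <;> rw [h] <;> norm_num
    rw [hf'_def]
    rw [ContinuousLinearMap.det, ContinuousLinearMap.coe_smul, LinearMap.det_smul]
    rw [abs_mul, abs_pow, habs, mul_one, finrank_euclideanSpace_fin]
    have hc : |(lam / dist z x) ^ 2| = (lam / ‖z - x‖) ^ 2 := by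
      rw [abs_of_nonneg (by positivity), dist_eq_norm]
    rw [hc, ← pow_mul]
  -- change of variables
  rw [← himg, lintegral_image_eq_lintegral_abs_det_fderiv_mul volume hsm hf' hinj]
  rw [← lintegral_const_mul' _ _ ENNReal.ofReal_ne_top]
  -- replace the ball by s on the RHS
  have hae : {z : EuclideanSpace ℝ (Fin n) | ‖z - x‖ ≤ lam} =ᵐ[volume] s := by
    rw [hs_def]
    symm
    refine diff_ae_eq_self.2 ?_
    exact measure_mono_null inter_subset_right (measure_singleton x)
  rw [setLIntegral_congr hae]
  refine setLIntegral_congr_fun hsm (fun z hz => ?_) |>.symm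
  -- pointwise identity
  obtain ⟨hzx, h0, h1⟩ := hmem z hz
  rw [hΦ z, ← hΦ z]
  rw [show x + (lam ^ 2 / ‖z - x‖ ^ 2) • (z - x) = inversion x lam z from hΦ z]
  rw [show ‖x + (lam ^ 2 / ‖ξ - x‖ ^ 2) • (ξ - x) - inversion x lam z‖
      = lam ^ 2 / (‖ξ - x‖ * ‖z - x‖) * ‖ξ - z‖ by
    rw [hΦ ξ, ← dist_eq_norm, dist_inversion_inversion hξ hzx, dist_eq_norm, dist_eq_norm,
      dist_eq_norm]]
  rw [hdet z hz]
  rw [← ENNReal.ofReal_mul (by positivity), ← ENNReal.ofReal_mul (by positivity)]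
  congr 1
  have hρ : 0 < ‖ξ - x‖ := norm_sub_pos_iff.2 hξ
  set A := K (inversion x lam z) with hA
  set U := u (inversion x lam z) with hU
  have hA0 : 0 ≤ A := hK0 _
  have hU0 : 0 ≤ U := hu0 _
  set r := ‖z - x‖
  set ρ := ‖ξ - x‖
  set b := ‖ξ - z‖ with hb
  have hb0 : 0 ≤ b := norm_nonneg _
  rcases eq_or_lt_of_le hb0 with hb0' | hb0'
  · -- b = 0 : both sides vanish
    rw [← hb0']
    simp [Real.zero_rpow he.ne']
  · -- b > 0
    have ha : 0 < lam / r := by positivity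
    have hre : (0:ℝ) < (lam / r) ^ e := Real.rpow_pos_of_pos ha e
    have hkey : lam ^ 2 / (ρ * r) = (lam / ρ) * (lam / r) := by
      field_simp
    have hUp : ((lam / r) ^ e * U) ^ p = (lam / r) ^ ((n : ℝ) + 2 * σ) * U ^ p := by
      rw [Real.mul_rpow hre.le hU0, ← Real.rpow_mul ha.le, hep]
    have hden : ((lam / ρ) * (lam / r) * b) ^ e = (lam / ρ) ^ e * (lam / r) ^ e * b ^ e := by
      rw [Real.mul_rpow (by positivity) hb0, Real.mul_rpow (by positivity) (by positivity)]
    have h2n' : (lam / r) ^ (2 * n) = (lam / r) ^ e * (lam / r) ^ ((n : ℝ) + 2 * σ) := by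
      rw [← Real.rpow_natCast (lam / r) (2 * n), ← Real.rpow_add ha]
      congr 1
      push_cast
      rw [he_def]
      ring
    rw [hkey, hden, hUp, h2n']
    have hrq : (0:ℝ) < (lam / r) ^ ((n:ℝ) + 2 * σ) := Real.rpow_pos_of_pos ha _
    have hce : (0:ℝ) < (lam / ρ) ^ e := Real.rpow_pos_of_pos (by positivity) e
    have hbe : (0:ℝ) < b ^ e := Real.rpow_pos_of_pos hb0' e
    field_simp
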